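/- (Rotational symmetry of a configuration corresponds to periodicity of its gap sequence.) Let n ≥ 1 and let x : Fin n → ℝ be strictly increasing with x (n−1) − x 0 < 2π, giving n distinct points p_i := exp(I·(x i)) on the unit circle in ℂ, and let S := {p_i : i ∈ Fin n}. Define the gap sequence θ : Fin n → ℝ by θ i = x (i+1) − x i for i < n−1 and θ (n−1) = 2π − (x (n−1) − x 0). Then there exists u ∈ ℂ with u ≠ 1 and {u·z : z ∈ S} = S (i.e., the configuration is rotationally symmetric) if and only if there exists k ∈ Fin n with k ≠ 0 and rot_k θ = θ (i.e., the gap sequence has a nontrivial cyclic period). -/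

import Mathlib

open Complex

private lemma exp_I_eq_iff (a b : ℝ) :
    Complex.exp (Complex.I * a) = Complex.exp (Complex.I * b) ↔
      ∃ c : ℤ, a = b + 2 * Real.pi * c := by
  rw [Complex.exp_eq_exp_iff_exists_int]
  constructor
  · rintro ⟨c, hc⟩
    refine ⟨c, ?_⟩
    have h2 : Complex.I * ((a : ℂ) - b - 2 * Real.pi * c) = 0 := by linear_combination hc
    rcases mul_eq_zero.mp h2 with h | h
    · exact absurd h Complex.I_ne_zero
    · have : (a : ℂ) = (b : ℂ) + 2 * Real.pi * c := by linear_combination h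
      exact_mod_cast this
  · rintro ⟨c, hc⟩
    exact ⟨c, by rw [hc]; push_cast; ring⟩

private lemma int_zero_of_small {c : ℤ} (h1 : -(2 * Real.pi) < 2 * Real.pi * c)
    (h2 : 2 * Real.pi * c < 2 * Real.pi) : c = 0 := by
  have hπ : (0 : ℝ) < 2 * Real.pi := by positivity
  have h3 : (c : ℝ) < 1 := by
    have := (mul_lt_mul_iff_right₀ hπ).mp (by linarith : 2 * Real.pi * (c : ℝ) < 2 * Real.pi * 1)
    exact this
  have h4 : (-1 : ℝ) < c := by
    have := (mul_lt_mul_iff_right₀ hπ).mp (by linarith : 2 * Real.pi * (-1 : ℝ) < 2 * Real.pi * c)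
    exact this
  have h5 : c < 1 := by exact_mod_cast h3
  have h6 : -1 < c := by exact_mod_cast h4
  omega

private lemma nat_mod_helper {a n : ℕ} (h1 : n ≤ a) (h2 : a < 2 * n) : a % n = a - n := by
  rw [Nat.mod_eq_sub_mod h1, Nat.mod_eq_of_lt (by omega)]

private lemma fin_strictMono_eq_id {n : ℕ} {g : Fin n → Fin n} (hg : StrictMono g) :
    ∀ i, g i = i := by
  have hr : Set.range g = Set.range (id : Fin n → Fin n) := by
    rw [Set.range_id]
    exact Set.range_eq_univ.mpr (Finite.surjective_of_injective hg.injective)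
  have inst : WellFoundedLT (Fin n) := inferInstance
  have h2 := (@StrictMono.range_inj (Fin n) (Fin n) _ _ inst g id hg strictMono_id).mp hr
  exact fun i => congrFun h2 i

/-- The rotation of a gap sequence `θ : Fin n → ℝ` by `k`: `rot k θ = fun j => θ (j + k)`. -/
def rot {n : ℕ} (k : Fin n) (θ : Fin n → ℝ) : Fin n → ℝ := fun j => θ (j + k)

/-- Rotational symmetry of a configuration of `n` points on the unit circle corresponds to
nontrivial cyclic periodicity of its gap sequence. -/
theorem rotationallySymmetric_iff_periodic_gaps {n : ℕ} [NeZero n]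
    (x : Fin n → ℝ) (hx : StrictMono x)
    (hspan : x ⟨n - 1, Nat.sub_lt (Nat.pos_of_ne_zero (NeZero.ne n)) Nat.one_pos⟩ - x 0
      < 2 * Real.pi)
    (θ : Fin n → ℝ)
    (hθ : ∀ i : Fin n, θ i =
      if (i : ℕ) < n - 1 then x (i + 1) - x i
      else 2 * Real.pi -
        (x ⟨n - 1, Nat.sub_lt (Nat.pos_of_ne_zero (NeZero.ne n)) Nat.one_pos⟩ - x 0)) :
    (∃ u : ℂ, u ≠ 1 ∧
        (fun z : ℂ => u * z) '' (Set.range fun i : Fin n => Complex.exp (Complex.I * (x i)))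
          = Set.range fun i : Fin n => Complex.exp (Complex.I * (x i))) ↔
    (∃ k : Fin n, k ≠ 0 ∧ rot k θ = θ) := by
  rcases n with _ | _ | m
  · exact absurd rfl (NeZero.ne 0)
  · -- n = 1 : both sides are false
    constructor
    · rintro ⟨u, hu1, hS⟩
      exfalso
      have h0 : Complex.exp (Complex.I * (x 0)) ∈
          Set.range fun i : Fin (0+1) => Complex.exp (Complex.I * (x i)) := ⟨0, rfl⟩
      rw [← hS] at h0
      obtain ⟨z, ⟨i, rfl⟩, hz2⟩ := h0
      have hi : i = 0 := Fin.ext (Nat.lt_one_iff.mp i.isLt)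
      subst hi
      have h3 : u * Complex.exp (Complex.I * (x 0)) = Complex.exp (Complex.I * (x 0)) := hz2
      have h4 : u * Complex.exp (Complex.I * (x 0)) = 1 * Complex.exp (Complex.I * (x 0)) := by
        rw [h3, one_mul]
      exact hu1 (mul_right_cancel₀ (Complex.exp_ne_zero _) h4)
    · rintro ⟨k, hk, -⟩
      exact absurd (Fin.ext (Nat.lt_one_iff.mp k.isLt)) hk
  · -- main case : n = m + 2
    have hπ : (0 : ℝ) < Real.pi := Real.pi_pos
    have hspan' : x ⟨m + 1, by omega⟩ - x 0 < 2 * Real.pi := hspan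
    have hθ' : ∀ i : Fin (m+1+1), θ i =
        if (i : ℕ) < m + 1 then x (i + 1) - x i
        else 2 * Real.pi - (x ⟨m + 1, by omega⟩ - x 0) := fun i => hθ i
    have hx0last : x 0 < x ⟨m + 1, by omega⟩ := hx (by simp [Fin.lt_def])
    have hle : ∀ a b : Fin (m+1+1), x a - x b < 2 * Real.pi := by
      intro a b
      have ha := a.isLt
      have h1 : x a ≤ x ⟨m + 1, by omega⟩ := hx.monotone (by rw [Fin.le_def]; simp; omega)
      have h2 : x 0 ≤ x b := hx.monotone (by rw [Fin.le_def]; simp)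
      linarith
    have hsucc : ∀ j : Fin (m+1+1), (j : ℕ) + 1 < m + 2 → ((j + 1 : Fin (m+1+1)) : ℕ) = (j : ℕ) + 1 := by
      intro j h
      rw [Fin.add_def]
      simp only [Fin.val_one]
      exact Nat.mod_eq_of_lt h
    -- the gap congruence lemma
    have hL : ∀ j : Fin (m+1+1), ∃ c : ℤ, θ j = x (j + 1) - x j + 2 * Real.pi * c := by
      intro j
      rcases lt_or_ge (j : ℕ) (m + 1) with h | h
      · exact ⟨0, by rw [hθ' j, if_pos h]; push_cast; ring⟩
      · have hja := j.isLt
        have hj : j = ⟨m + 1, by omega⟩ := Fin.ext (by simp; omega)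
        refine ⟨1, ?_⟩
        rw [hθ' j, if_neg (by omega)]
        have h1 : (j + 1 : Fin (m+1+1)) = 0 := by
          apply Fin.ext
          rw [Fin.add_def]
          simp only [Fin.val_one, Fin.val_zero]
          rw [hj]
          simp
        rw [h1, hj]
        push_cast; ring
    have hθpos : ∀ j : Fin (m+1+1), 0 < θ j := by
      intro j
      rw [hθ' j]
      split_ifs with h
      · have h2 : j < j + 1 := by
          rw [Fin.lt_def, hsucc j (by omega)]
          omega
        linarith [hx h2]
      · linarith
    have hθlt : ∀ j : Fin (m+1+1), θ j < 2 * Real.pi := by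
      intro j
      rw [hθ' j]
      split_ifs with h
      · have := hle (j + 1) j
        have h2 : x j < x (j + 1) := hx (by rw [Fin.lt_def, hsucc j (by omega)]; omega)
        linarith
      · linarith
    constructor
    · -- forward direction
      rintro ⟨u, hu1, hS⟩
      have hcomm2 : ∀ a b : Fin (m+1+1), (a + b) + 1 = (a + 1) + b := by
        intro a b
        apply Fin.ext
        simp only [Fin.add_def, Fin.val_one]
        rw [Nat.mod_add_mod, Nat.mod_add_mod]
        congr 1
        omega
      have hsub : ∀ a b : Fin (m+1+1), ((a - b : Fin (m+1+1)) : ℕ)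
          = if (b : ℕ) ≤ (a : ℕ) then (a : ℕ) - b else (a : ℕ) + (m+2) - b := by
        intro a b
        have ha := a.isLt
        have hb := b.isLt
        rw [Fin.sub_def]
        show (((m+1+1) - (b : ℕ)) + (a : ℕ)) % (m+1+1) = _
        split_ifs with h
        · rw [nat_mod_helper (by omega) (by omega)]
          omega
        · rw [Nat.mod_eq_of_lt (by omega)]
          omega
      have hmem : ∀ i : Fin (m+1+1), ∃ j : Fin (m+1+1),
          Complex.exp (Complex.I * (x j)) = u * Complex.exp (Complex.I * (x i)) := by
        intro i
        have hmem2 : u * Complex.exp (Complex.I * (x i)) ∈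
            Set.range fun i : Fin (m+1+1) => Complex.exp (Complex.I * (x i)) := by
          rw [← hS]
          exact ⟨Complex.exp (Complex.I * (x i)), ⟨i, rfl⟩, rfl⟩
        obtain ⟨j, hj⟩ := hmem2
        exact ⟨j, hj⟩
      choose f hf using hmem
      have hpinj : ∀ i j : Fin (m+1+1),
          Complex.exp (Complex.I * (x i)) = Complex.exp (Complex.I * (x j)) → i = j := by
        intro i j hij
        obtain ⟨c, hc⟩ := (exp_I_eq_iff _ _).mp hij
        have h1 := hle i j
        have h2 := hle j i
        have hc0 : c = 0 := int_zero_of_small (by linarith) (by linarith)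
        rw [hc0] at hc
        simp at hc
        exact hx.injective hc
      have hu0 : u ≠ 0 := by
        intro h
        have h1 := hf 0
        rw [h, zero_mul] at h1
        exact Complex.exp_ne_zero _ h1
      have habs0 : ∀ r : ℝ, ‖(Complex.exp (Complex.I * r))‖ = 1 := by
        intro r
        rw [Complex.norm_exp]
        simp
      have habs : ‖u‖ = 1 := by
        have h1 := congrArg (‖·‖) (hf 0)
        rw [norm_mul, habs0, habs0, mul_one] at h1
        exact h1.symm
      have hus : u = Complex.exp (Complex.I * ((u.arg : ℝ) : ℂ)) := by
        conv_lhs => rw [← Complex.norm_mul_exp_arg_mul_I u]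
        rw [habs, Complex.ofReal_one, one_mul, mul_comm]
      have hm0 : ∀ i, ∃ c : ℤ, x (f i) = x i + u.arg + 2 * Real.pi * c := by
        intro i
        have h1 := hf i
        rw [hus, ← Complex.exp_add] at h1
        have h2 : Complex.I * ((u.arg : ℝ) : ℂ) + Complex.I * ((x i : ℝ) : ℂ)
            = Complex.I * (((x i + u.arg : ℝ)) : ℂ) := by push_cast; ring
        rw [h2] at h1
        obtain ⟨c, hc⟩ := (exp_I_eq_iff _ _).mp h1
        exact ⟨c, by linarith⟩
      choose mm hm using hm0
      have hmono : ∀ i j : Fin (m+1+1), i < j → mm j ≤ mm i := by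
        intro i j hij
        have h1 := hm i
        have h2 := hm j
        have h3 := hle (f j) (f i)
        have h4 : x i < x j := hx hij
        by_contra hcon
        push_neg at hcon
        have h5 : (mm i : ℝ) + 1 ≤ (mm j : ℝ) := by exact_mod_cast hcon
        have h6 : 2 * Real.pi * ((mm i : ℝ) + 1) ≤ 2 * Real.pi * (mm j : ℝ) :=
          mul_le_mul_of_nonneg_left h5 (by positivity)
        linarith
      have hbnd : ∀ i j : Fin (m+1+1), (mm i : ℤ) ≤ mm j + 1 := by
        intro i j
        have h1 := hm i
        have h2 := hm j
        have h3 := hle (f i) (f j)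
        have h4 := hle j i
        by_contra hcon
        push_neg at hcon
        have h5' : (mm j : ℤ) + 2 ≤ mm i := by omega
        have h5 : (mm j : ℝ) + 2 ≤ (mm i : ℝ) := by exact_mod_cast h5'
        have h6 : 2 * Real.pi * ((mm j : ℝ) + 2) ≤ 2 * Real.pi * (mm i : ℝ) :=
          mul_le_mul_of_nonneg_left h5 (by positivity)
        linarith
      have hAcase : ∀ i : Fin (m+1+1), mm i = mm 0 → f 0 ≤ f i := by
        intro i hi
        have h2 := hm 0
        have h3 : x 0 ≤ x i := hx.monotone (Fin.zero_le i)
        have h1' : x (f i) = x i + u.arg + 2 * Real.pi * ((mm 0 : ℤ) : ℝ) := by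
          rw [hm i, hi]
        exact hx.le_iff_le.mp (by linarith)
      have hBval : ∀ i : Fin (m+1+1), mm i ≠ mm 0 → mm i = mm 0 - 1 := by
        intro i hi
        have hne : i ≠ 0 := by
          intro h
          rw [h] at hi
          exact hi rfl
        have h1 : mm i ≤ mm 0 := hmono 0 i (Fin.pos_of_ne_zero hne)
        have h2 := hbnd 0 i
        omega
      have hBcase : ∀ i : Fin (m+1+1), mm i ≠ mm 0 → f i < f 0 := by
        intro i hi
        have h2 := hm 0
        have h3 := hle i 0
        have hci : mm i = mm 0 - 1 := hBval i hi
        have h1' : x (f i) = x i + u.arg + 2 * Real.pi * ((mm 0 : ℤ) : ℝ) - 2 * Real.pi := by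
          rw [hm i, hci]
          push_cast
          ring
        exact hx.lt_iff_lt.mp (by linarith)
      have hg : StrictMono (fun i : Fin (m+1+1) => f i - f 0) := by
        intro i j hij
        have hxij : x i < x j := hx hij
        have h1 := hm i
        have h2 := hm j
        have hfi := (f i).isLt
        have hfj := (f j).isLt
        by_cases hi : mm i = mm 0 <;> by_cases hj : mm j = mm 0
        · have ha1 : f 0 ≤ f i := hAcase i hi
          have ha2 : f 0 ≤ f j := hAcase j hj
          have h1' : x (f i) = x i + u.arg + 2 * Real.pi * ((mm 0 : ℤ) : ℝ) := by rw [hm i, hi]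
          have h2' : x (f j) = x j + u.arg + 2 * Real.pi * ((mm 0 : ℤ) : ℝ) := by rw [hm j, hj]
          have hflt : f i < f j := hx.lt_iff_lt.mp (by linarith)
          rw [Fin.le_def] at ha1 ha2
          rw [Fin.lt_def] at hflt ⊢
          rw [hsub, hsub, if_pos ha1, if_pos ha2]
          omega
        · have ha1 : f 0 ≤ f i := hAcase i hi
          have ha2 : f j < f 0 := hBcase j hj
          rw [Fin.le_def] at ha1
          rw [Fin.lt_def] at ha2
          rw [Fin.lt_def, hsub, hsub, if_pos ha1, if_neg (by omega)]
          omega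
        · exfalso
          have h3 : mm j ≤ mm i := hmono i j hij
          have h4 : mm i = mm 0 - 1 := hBval i hi
          omega
        · have hb1 : f i < f 0 := hBcase i hi
          have hb2 : f j < f 0 := hBcase j hj
          have hci := hBval i hi
          have hcj := hBval j hj
          have h1' : x (f i) = x i + u.arg + 2 * Real.pi * ((mm 0 : ℤ) : ℝ) - 2 * Real.pi := by
            rw [hm i, hci]; push_cast; ring
          have h2' : x (f j) = x j + u.arg + 2 * Real.pi * ((mm 0 : ℤ) : ℝ) - 2 * Real.pi := by
            rw [hm j, hcj]; push_cast; ring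
          have hflt : f i < f j := hx.lt_iff_lt.mp (by linarith)
          rw [Fin.lt_def] at hb1 hb2 hflt ⊢
          rw [hsub, hsub, if_neg (by omega), if_neg (by omega)]
          omega
      have hfeq : ∀ i : Fin (m+1+1), f i = i + f 0 := by
        intro i
        have := fin_strictMono_eq_id hg i
        exact sub_eq_iff_eq_add.mp this
      refine ⟨f 0, ?_, ?_⟩
      · intro h0
        have h1 := hf 0
        rw [h0] at h1
        have h2 : u * Complex.exp (Complex.I * (x 0)) = 1 * Complex.exp (Complex.I * (x 0)) := by
          rw [← h1, one_mul]
        exact hu1 (mul_right_cancel₀ (Complex.exp_ne_zero _) h2)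
      · funext j
        simp only [rot]
        obtain ⟨a, ha⟩ := hL (j + f 0)
        obtain ⟨b, hb⟩ := hL j
        have E1 : x (j + f 0) = x j + u.arg + 2 * Real.pi * (mm j) := by
          rw [← hfeq j]
          exact hm j
        have E2 : x ((j + f 0) + 1) = x (j + 1) + u.arg + 2 * Real.pi * (mm (j + 1)) := by
          rw [hcomm2 j (f 0), ← hfeq (j + 1)]
          exact hm (j + 1)
        have hMe : θ (j + f 0) - θ j = 2 * Real.pi * ((a - b + mm (j + 1) - mm j : ℤ) : ℝ) := by
          push_cast
          linarith
        have hM0 : (a - b + mm (j + 1) - mm j : ℤ) = 0 := by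
          apply int_zero_of_small
          · linarith [hθpos (j + f 0), hθlt j]
          · linarith [hθlt (j + f 0), hθpos j]
        rw [hM0] at hMe
        simp at hMe
        linarith
    · -- backward direction
      rintro ⟨k, hk0, hper⟩
      have hper' : ∀ j : Fin (m+1+1), θ (j + k) = θ j := fun j => congrFun hper j
      have hkey : ∀ (v : ℕ) (h : v < m + 2), ∃ c : ℤ,
          x ((⟨v, h⟩ : Fin (m+1+1)) + k) = x ⟨v, h⟩ + (x k - x 0) + 2 * Real.pi * c := by
        intro v
        induction v with
        | zero =>
          intro h
          refine ⟨0, ?_⟩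
          have e : (⟨0, h⟩ : Fin (m+1+1)) = 0 := Fin.ext (by simp)
          rw [e, zero_add]
          push_cast; ring
        | succ v ih =>
          intro h
          have hv : v < m + 2 := by omega
          obtain ⟨c, hc⟩ := ih hv
          obtain ⟨a, ha⟩ := hL ⟨v, hv⟩
          obtain ⟨b, hb⟩ := hL (⟨v, hv⟩ + k)
          have hsucc1 : (⟨v, hv⟩ : Fin (m+1+1)) + 1 = ⟨v+1, h⟩ :=
            Fin.ext (by rw [hsucc ⟨v, hv⟩ (by simpa using h)])
          have hcomm : ((⟨v, hv⟩ : Fin (m+1+1)) + k) + 1 = (⟨v+1, h⟩ : Fin (m+1+1)) + k := by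
            apply Fin.ext
            simp only [Fin.add_def, Fin.val_one]
            rw [Nat.mod_add_mod]
            congr 1
            omega
          refine ⟨c + a - b, ?_⟩
          have h1 := hper' ⟨v, hv⟩
          rw [hb, ha] at h1
          have e1 := congrArg x hcomm
          have e2 := congrArg x hsucc1
          push_cast
          linarith [e1, e2, hc, h1]
      have hkey' : ∀ i : Fin (m+1+1), ∃ c : ℤ,
          x (i + k) = x i + (x k - x 0) + 2 * Real.pi * c := by
        intro i
        have h := hkey i.val i.isLt
        simpa using h
      refine ⟨Complex.exp (Complex.I * ((x k - x 0 : ℝ) : ℂ)), ?_, ?_⟩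
      · intro hu
        obtain ⟨c, hc⟩ := (exp_I_eq_iff (x k - x 0) 0).mp (by rw [hu]; simp)
        have hkpos : x 0 < x k := hx (Fin.pos_of_ne_zero hk0)
        have hklt := hle k 0
        have hc0 : c = 0 := int_zero_of_small (by linarith) (by linarith)
        rw [hc0] at hc
        simp at hc
        linarith
      · have hmap : ∀ i : Fin (m+1+1),
            Complex.exp (Complex.I * ((x k - x 0 : ℝ) : ℂ)) * Complex.exp (Complex.I * (x i))
              = Complex.exp (Complex.I * (x (i + k))) := by
          intro i
          obtain ⟨c, hc⟩ := hkey' i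
          rw [← Complex.exp_add]
          have h2 : Complex.I * ((x k - x 0 : ℝ) : ℂ) + Complex.I * ((x i : ℝ) : ℂ)
              = Complex.I * (((x k - x 0) + x i : ℝ) : ℂ) := by push_cast; ring
          rw [h2]
          exact ((exp_I_eq_iff _ _).mpr ⟨c, by linarith⟩).symm
        ext z
        simp only [Set.mem_image, Set.mem_range]
        constructor
        · rintro ⟨w, ⟨i, rfl⟩, rfl⟩
          exact ⟨i + k, (hmap i).symm⟩
        · rintro ⟨i, rfl⟩
          refine ⟨Complex.exp (Complex.I * (x (i - k))), ⟨i - k, rfl⟩, ?_⟩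
          rw [hmap (i - k)]
          congr 1
          rw [sub_add_cancel]
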